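/- Let $A_i,B_i$ satisfy $\deg B_i+1\leq\deg A_i=a_i+1$ for $i=1,2$, and in the borderline case $a_1=b_1+1$, $a_2=b_2+1$ assume $\alpha_1(a_1+1)\alpha_2(a_2+1)-\beta_1(b_1+1)\beta_2(b_2+1)\neq 0$. Then the space of formal power series $F(z,w)$ satisfying $[(\partial_z+w)B_2(\partial_w)-A_2(\partial_w)]F=0$ and $[(\partial_w+z)B_1(\partial_z)-A_1(\partial_z)]F=0$ has dimension exactly $(a_1+1)(a_2+1)$. -/

import Mathlib

open Polynomial
open Finset

/-- The space of coefficient arrays `(μ_{jk})`, encoding the formal generating function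
`F(z,w) = ∑_{j,k} μ_{jk} z^j w^k / (j! k!)`. -/
abbrev Coeffs : Type := ℕ → ℕ → ℂ

/-- The operator `∂_z` on generating functions, acting on coefficient arrays. -/
noncomputable def Dz : Module.End ℂ Coeffs where
  toFun μ := fun j k => μ (j + 1) k
  map_add' _ _ := rfl
  map_smul' _ _ := rfl

/-- The operator `∂_w` on generating functions, acting on coefficient arrays. -/
noncomputable def Dw : Module.End ℂ Coeffs where
  toFun μ := fun j k => μ j (k + 1)
  map_add' _ _ := rfl
  map_smul' _ _ := rfl

/-- Multiplication by `z` on generating functions, acting on coefficient arrays. -/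
noncomputable def Mz : Module.End ℂ Coeffs where
  toFun μ := fun j k => (j : ℂ) * μ (j - 1) k
  map_add' x y := by funext j k; simp [mul_add]
  map_smul' c x := by funext j k; simp [smul_eq_mul]; ring

/-- Multiplication by `w` on generating functions, acting on coefficient arrays. -/
noncomputable def Mw : Module.End ℂ Coeffs where
  toFun μ := fun j k => (k : ℂ) * μ j (k - 1)
  map_add' x y := by funext j k; simp [mul_add]
  map_smul' c x := by funext j k; simp [smul_eq_mul]; ring

/-- A polynomial `∑_{j=0}^{n} c_j X^j` given by its list of coefficients. -/
noncomputable def polyOf (n : ℕ) (c : ℕ → ℂ) : Polynomial ℂ :=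
  ∑ j ∈ Finset.range (n + 1), C (c j) * X ^ j

lemma Dw_apply (μ : Coeffs) (j k : ℕ) : Dw μ j k = μ j (k+1) := rfl
lemma Dz_apply (μ : Coeffs) (j k : ℕ) : Dz μ j k = μ (j+1) k := rfl
lemma Mw_apply (μ : Coeffs) (j k : ℕ) : Mw μ j k = k * μ j (k-1) := rfl
lemma Mz_apply (μ : Coeffs) (j k : ℕ) : Mz μ j k = j * μ (j-1) k := rfl

lemma Dw_pow_apply (m : ℕ) (μ : Coeffs) (j k : ℕ) : ((Dw ^ m) μ) j k = μ j (k + m) := by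
  induction m generalizing k with
  | zero => rfl
  | succ n ih => rw [pow_succ', Module.End.mul_apply, Dw_apply, ih]; ring_nf

lemma Dz_pow_apply (m : ℕ) (μ : Coeffs) (j k : ℕ) : ((Dz ^ m) μ) j k = μ (j + m) k := by
  induction m generalizing j with
  | zero => rfl
  | succ n ih => rw [pow_succ', Module.End.mul_apply, Dz_apply, ih]; ring_nf

lemma aeval_polyOf_Dw (n : ℕ) (c : ℕ → ℂ) (μ : Coeffs) (j k : ℕ) :
    ((aeval Dw (polyOf n c)) μ) j k = ∑ m ∈ range (n+1), c m * μ j (k+m) := by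
  unfold polyOf
  rw [map_sum, LinearMap.sum_apply]
  simp only [Finset.sum_apply]
  refine Finset.sum_congr rfl fun m _ => ?_
  rw [map_mul, aeval_C, aeval_X_pow, Module.End.mul_apply, Module.algebraMap_end_apply]
  simp [Dw_pow_apply, smul_eq_mul]

lemma aeval_polyOf_Dz (n : ℕ) (c : ℕ → ℂ) (μ : Coeffs) (j k : ℕ) :
    ((aeval Dz (polyOf n c)) μ) j k = ∑ m ∈ range (n+1), c m * μ (j+m) k := by
  unfold polyOf
  rw [map_sum, LinearMap.sum_apply]
  simp only [Finset.sum_apply]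
  refine Finset.sum_congr rfl fun m _ => ?_
  rw [map_mul, aeval_C, aeval_X_pow, Module.End.mul_apply, Module.algebraMap_end_apply]
  simp [Dz_pow_apply, smul_eq_mul]

lemma L1_apply (a2 b2 : ℕ) (α2 β2 : ℕ → ℂ) (μ : Coeffs) (j k : ℕ) :
    (((Dz + Mw) * aeval Dw (polyOf (b2+1) β2) - aeval Dw (polyOf (a2+1) α2)) μ) j k
    = ((∑ m ∈ range (b2+2), β2 m * μ (j+1) (k+m))
        + (k:ℂ) * (∑ m ∈ range (b2+2), β2 m * μ j (k-1+m)))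
      - ∑ m ∈ range (a2+2), α2 m * μ j (k+m) := by
  simp only [LinearMap.sub_apply, Module.End.mul_apply, LinearMap.add_apply, Pi.sub_apply,
    Pi.add_apply]
  rw [Dz_apply, Mw_apply, aeval_polyOf_Dw (b2+1) β2 μ (j+1) k,
    aeval_polyOf_Dw (b2+1) β2 μ j (k-1), aeval_polyOf_Dw (a2+1) α2 μ j k]

lemma L2_apply (a1 b1 : ℕ) (α1 β1 : ℕ → ℂ) (μ : Coeffs) (j k : ℕ) :
    (((Dw + Mz) * aeval Dz (polyOf (b1+1) β1) - aeval Dz (polyOf (a1+1) α1)) μ) j k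
    = ((∑ m ∈ range (b1+2), β1 m * μ (j+m) (k+1))
        + (j:ℂ) * (∑ m ∈ range (b1+2), β1 m * μ (j-1+m) k))
      - ∑ m ∈ range (a1+2), α1 m * μ (j+m) k := by
  simp only [LinearMap.sub_apply, Module.End.mul_apply, LinearMap.add_apply, Pi.sub_apply,
    Pi.add_apply]
  rw [Dw_apply, Mz_apply, aeval_polyOf_Dz (b1+1) β1 μ j (k+1),
    aeval_polyOf_Dz (b1+1) β1 μ (j-1) k, aeval_polyOf_Dz (a1+1) α1 μ j k]

lemma commute_DzDw : Commute Dz Dw := by apply LinearMap.ext; intro μ; rfl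
lemma commute_DzMw : Commute Dz Mw := by apply LinearMap.ext; intro μ; rfl
lemma commute_DwMz : Commute Dw Mz := by apply LinearMap.ext; intro μ; rfl

lemma commute_PQ : Commute (Dz + Mw) (Dw + Mz) := by
  apply LinearMap.ext; intro μ
  funext j k
  show ((Dw + Mz) μ) (j+1) k + (k:ℂ) * ((Dw + Mz) μ) j (k-1)
      = ((Dz + Mw) μ) j (k+1) + (j:ℂ) * ((Dz + Mw) μ) (j-1) k
  show (μ (j+1) (k+1) + ((j+1:ℕ):ℂ) * μ j k) + (k:ℂ) * (μ j (k-1+1) + (j:ℂ) * μ (j-1) (k-1))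
      = (μ (j+1) (k+1) + ((k+1:ℕ):ℂ) * μ j (k+1-1)) + (j:ℂ) * (μ (j-1+1) k + (k:ℂ) * μ (j-1) (k-1))
  rcases Nat.eq_zero_or_pos k with hk | hk
  · subst hk
    rcases Nat.eq_zero_or_pos j with hj | hj
    · subst hj; push_cast; ring_nf
    · have : j - 1 + 1 = j := by omega
      rw [this]; push_cast; ring_nf
  · have h1 : k - 1 + 1 = k := by omega
    have h2 : k + 1 - 1 = k := by omega
    rcases Nat.eq_zero_or_pos j with hj | hj
    · subst hj; rw [h1, h2]; push_cast; ring_nf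
    · have h3 : j - 1 + 1 = j := by omega
      rw [h1, h2, h3]; push_cast; ring

lemma Commute.aeval_right' {A : Type*} [Ring A] [Algebra ℂ A] {x y : A} (h : Commute x y)
    (p : ℂ[X]) : Commute x (aeval y p) := by
  induction p using Polynomial.induction_on with
  | C a => simpa using (Algebra.commute_algebraMap_right a x)
  | add p q hp hq => simpa [map_add] using hp.add_right hq
  | monomial n a hp =>
    simp only [map_mul, map_pow, aeval_C, aeval_X]
    exact ((Algebra.commute_algebraMap_right a x)).mul_right ((h.pow_right _))

lemma commute_L1L2 (a1 b1 a2 b2 : ℕ) (α1 β1 α2 β2 : ℕ → ℂ) :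
    Commute ((Dz + Mw) * aeval Dw (polyOf (b2+1) β2) - aeval Dw (polyOf (a2+1) α2))
      ((Dw + Mz) * aeval Dz (polyOf (b1+1) β1) - aeval Dz (polyOf (a1+1) α1)) := by
  have cPz : Commute (Dz + Mw) Dz := (Commute.refl Dz).add_left commute_DzMw.symm
  have cwQ : Commute Dw (Dw + Mz) := (Commute.refl Dw).add_right commute_DwMz
  have cwz : Commute Dw Dz := commute_DzDw.symm
  have cP_B1 : Commute (Dz + Mw) (aeval Dz (polyOf (b1+1) β1)) := cPz.aeval_right' _
  have cP_A1 : Commute (Dz + Mw) (aeval Dz (polyOf (a1+1) α1)) := cPz.aeval_right' _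
  have cB2_Q : Commute (aeval Dw (polyOf (b2+1) β2)) (Dw + Mz) :=
    ((cwQ.symm).aeval_right' _).symm
  have cA2_Q : Commute (aeval Dw (polyOf (a2+1) α2)) (Dw + Mz) :=
    ((cwQ.symm).aeval_right' _).symm
  have cB2_B1 : Commute (aeval Dw (polyOf (b2+1) β2)) (aeval Dz (polyOf (b1+1) β1)) :=
    ((cwz.aeval_right' _).symm.aeval_right' _).symm
  have cB2_A1 : Commute (aeval Dw (polyOf (b2+1) β2)) (aeval Dz (polyOf (a1+1) α1)) :=
    ((cwz.aeval_right' _).symm.aeval_right' _).symm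
  have cA2_B1 : Commute (aeval Dw (polyOf (a2+1) α2)) (aeval Dz (polyOf (b1+1) β1)) :=
    ((cwz.aeval_right' _).symm.aeval_right' _).symm
  have cA2_A1 : Commute (aeval Dw (polyOf (a2+1) α2)) (aeval Dz (polyOf (a1+1) α1)) :=
    ((cwz.aeval_right' _).symm.aeval_right' _).symm
  have hXU : Commute ((Dz + Mw) * aeval Dw (polyOf (b2+1) β2))
      ((Dw + Mz) * aeval Dz (polyOf (b1+1) β1)) :=
    (commute_PQ.mul_left cB2_Q).mul_right (cP_B1.mul_left cB2_B1)
  have hYU : Commute (aeval Dw (polyOf (a2+1) α2))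
      ((Dw + Mz) * aeval Dz (polyOf (b1+1) β1)) := cA2_Q.mul_right cA2_B1
  have hXV : Commute ((Dz + Mw) * aeval Dw (polyOf (b2+1) β2))
      (aeval Dz (polyOf (a1+1) α1)) := cP_A1.mul_left cB2_A1
  have hYV : Commute (aeval Dw (polyOf (a2+1) α2)) (aeval Dz (polyOf (a1+1) α1)) := cA2_A1
  exact (hXU.sub_left hYU).sub_right (hXV.sub_left hYV)


lemma ext0 (a2 b2 : ℕ) (α2 β2 : ℕ → ℂ) (hα2 : α2 (a2+1) ≠ 0) (hdeg2 : b2+1 ≤ a2) (μ : Coeffs)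
    (h1 : ∀ j k, (∑ m ∈ range (b2+2), β2 m * μ (j+1) (k+m))
        + (k:ℂ) * (∑ m ∈ range (b2+2), β2 m * μ j (k-1+m))
        = ∑ m ∈ range (a2+2), α2 m * μ j (k+m))
    (h0 : ∀ j k, k ≤ a2 → μ j k = 0) : μ = 0 := by
  have key : ∀ K j, μ j K = 0 := by
    intro K
    induction K using Nat.strong_induction_on with
    | _ K ih =>
      intro j
      by_cases hK : K ≤ a2
      · exact h0 j K hK
      · obtain ⟨k, rfl⟩ : ∃ k, K = k + (a2+1) := ⟨K - (a2+1), by omega⟩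
        have e := h1 j k
        rw [Finset.sum_range_succ (fun m => α2 m * μ j (k+m)) (a2+1)] at e
        rw [Finset.sum_eq_zero (fun m hm => by
              have := mem_range.mp hm
              rw [ih (k+m) (by omega) (j+1)]; ring)] at e
        rw [Finset.sum_eq_zero (fun m hm => by
              have := mem_range.mp hm
              rw [ih (k-1+m) (by omega) j]; ring)] at e
        rw [Finset.sum_eq_zero (fun m hm => by
              have := mem_range.mp hm
              rw [ih (k+m) (by omega) j]; ring)] at e
        have : α2 (a2+1) * μ j (k + (a2+1)) = 0 := by linear_combination -e
        rcases mul_eq_zero.mp this with h | h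
        · exact absurd h hα2
        · exact h
  funext j K
  exact key K j


lemma strip0 (a1 b1 a2 b2 : ℕ) (α1 β1 α2 β2 : ℕ → ℂ)
    (hα1 : α1 (a1+1) ≠ 0) (hα2 : α2 (a2+1) ≠ 0)
    (hdeg1 : b1+1 ≤ a1) (hdeg2 : b2+1 ≤ a2)
    (hborder : a1 = b1 + 1 → a2 = b2 + 1 →
      α1 (a1 + 1) * α2 (a2 + 1) - β1 (b1 + 1) * β2 (b2 + 1) ≠ 0)
    (μ : Coeffs)
    (h1 : ∀ j k, (∑ m ∈ range (b2+2), β2 m * μ (j+1) (k+m))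
        + (k:ℂ) * (∑ m ∈ range (b2+2), β2 m * μ j (k-1+m))
        = ∑ m ∈ range (a2+2), α2 m * μ j (k+m))
    (h2 : ∀ j k, (∑ m ∈ range (b1+2), β1 m * μ (j+m) (k+1))
        + (j:ℂ) * (∑ m ∈ range (b1+2), β1 m * μ (j-1+m) k)
        = ∑ m ∈ range (a1+2), α1 m * μ (j+m) k)
    (h0 : ∀ j k, j ≤ a1 → k ≤ a2 → μ j k = 0) :
    ∀ J k, k ≤ a2 → μ J k = 0 := by
  intro J
  induction J using Nat.strong_induction_on with
  | _ J ihJ =>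
    intro k
    induction k using Nat.strong_induction_on with
    | _ k ihk =>
      intro hk
      by_cases hJ : J ≤ a1
      · exact h0 J k hJ hk
      · obtain ⟨j0, rfl⟩ : ∃ j0, J = j0 + (a1+1) := ⟨J - (a1+1), by omega⟩
        have e := h2 j0 k
        rw [Finset.sum_range_succ (fun m => α1 m * μ (j0+m) k) (a1+1)] at e
        rw [Finset.sum_eq_zero (s := range (b1+2)) (f := fun m => β1 m * μ (j0-1+m) k)
            (fun m hm => by
              have := mem_range.mp hm
              have hz := ihJ (j0-1+m) (by omega) k hk
              first | (simp at hz; simp [hz]) | simp [hz])] at e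
        rw [Finset.sum_eq_zero (s := range (a1+1)) (f := fun m => α1 m * μ (j0+m) k)
            (fun m hm => by
              have := mem_range.mp hm
              have hz := ihJ (j0+m) (by omega) k hk
              first | (simp at hz; simp [hz]) | simp [hz])] at e
        by_cases hk2 : k < a2
        · rw [Finset.sum_eq_zero (s := range (b1+2)) (f := fun m => β1 m * μ (j0+m) (k+1))
              (fun m hm => by
                have := mem_range.mp hm
                have hz := ihJ (j0+m) (by omega) (k+1) (by omega)
                first | (simp at hz; simp [hz]) | simp [hz])] at e
          have h' : α1 (a1+1) * μ (j0+(a1+1)) k = 0 := by linear_combination -e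
          exact (mul_eq_zero.mp h').resolve_left hα1
        · have hka : k = a2 := by omega
          rw [hka] at e ihk ⊢
          -- values μ (j0+m) (a2+1) for "interior" m
          have hval : ∀ m, m < b1+2 → j0+m+1 < j0+(a1+1) → μ (j0+m) (a2+1) = 0 := by
            intro m hm hlt
            have e1 := h1 (j0+m) 0
            rw [Finset.sum_range_succ (fun m' => α2 m' * μ (j0+m) (0+m')) (a2+1)] at e1
            rw [Finset.sum_eq_zero (s := range (b2+2))
                (f := fun m' => β2 m' * μ (j0+m+1) (0+m'))
                (fun m' hm' => by
                  have := mem_range.mp hm'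
                  have hz := ihJ (j0+m+1) (by omega) (0+m') (by omega)
                  first | (simp at hz; simp [hz]) | simp [hz])] at e1
            rw [Finset.sum_eq_zero (s := range (b2+2))
                (f := fun m' => β2 m' * μ (j0+m) (0-1+m'))
                (fun m' hm' => by
                  have := mem_range.mp hm'
                  have hz := ihJ (j0+m) (by omega) (0-1+m') (by omega)
                  first | (simp at hz; simp [hz]) | simp [hz])] at e1
            rw [Finset.sum_eq_zero (s := range (a2+1))
                (f := fun m' => α2 m' * μ (j0+m) (0+m'))
                (fun m' hm' => by
                  have := mem_range.mp hm'
                  have hz := ihJ (j0+m) (by omega) (0+m') (by omega)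
                  first | (simp at hz; simp [hz]) | simp [hz])] at e1
            have h' : α2 (a2+1) * μ (j0+m) (0+(a2+1)) = 0 := by
              push_cast at e1; linear_combination -e1
            have := (mul_eq_zero.mp h').resolve_left hα2
            simpa using this
          by_cases hbord : a1 = b1+1 ∧ a2 = b2+1
          · -- borderline case
            rw [Finset.sum_range_succ (fun m => β1 m * μ (j0+m) (a2+1)) (b1+1)] at e
            rw [Finset.sum_eq_zero (s := range (b1+1))
                (f := fun m => β1 m * μ (j0+m) (a2+1))
                (fun m hm => by
                  have := mem_range.mp hm
                  have hz := hval m (by omega) (by omega)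
                  first | (simp at hz; simp [hz]) | simp [hz])] at e
            -- e : 0 + β1 (b1+1) * μ (j0+(b1+1)) (a2+1) + j0 * 0 = 0 + α1(a1+1) * μ J a2
            have e1 := h1 (j0+(b1+1)) 0
            rw [Finset.sum_range_succ (fun m' => α2 m' * μ (j0+(b1+1)) (0+m')) (a2+1)] at e1
            rw [Finset.sum_eq_zero (s := range (b2+2))
                (f := fun m' => β2 m' * μ (j0+(b1+1)) (0-1+m'))
                (fun m' hm' => by
                  have := mem_range.mp hm'
                  have hz := ihJ (j0+(b1+1)) (by omega) (0-1+m') (by omega)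
                  first | (simp at hz; simp [hz]) | simp [hz])] at e1
            rw [Finset.sum_eq_zero (s := range (a2+1))
                (f := fun m' => α2 m' * μ (j0+(b1+1)) (0+m'))
                (fun m' hm' => by
                  have := mem_range.mp hm'
                  have hz := ihJ (j0+(b1+1)) (by omega) (0+m') (by omega)
                  first | (simp at hz; simp [hz]) | simp [hz])] at e1
            rw [show j0+(b1+1)+1 = j0+(a1+1) by omega] at e1
            rw [Finset.sum_range_succ (fun m' => β2 m' * μ (j0+(a1+1)) (0+m')) (b2+1)] at e1
            rw [Finset.sum_eq_zero (s := range (b2+1))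
                (f := fun m' => β2 m' * μ (j0+(a1+1)) (0+m'))
                (fun m' hm' => by
                  have := mem_range.mp hm'
                  have hz := ihk (0+m') (by omega) (by omega)
                  first | (simp at hz; simp [hz]) | simp [hz])] at e1
            rw [show (0+(b2+1)) = a2 by omega] at e1
            rw [show (0+(a2+1)) = a2+1 by omega] at e1
            have h' : (α1 (a1+1) * α2 (a2+1) - β1 (b1+1) * β2 (b2+1)) * μ (j0+(a1+1)) a2 = 0 := by
              push_cast at e e1
              linear_combination (-(α2 (a2+1))) * e - β1 (b1+1) * e1
            exact (mul_eq_zero.mp h').resolve_left (hborder hbord.1 hbord.2)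
          · -- non-borderline
            rw [Finset.sum_eq_zero (s := range (b1+2))
                (f := fun m => β1 m * μ (j0+m) (a2+1))
                (fun m hm => by
                  have hmr := mem_range.mp hm
                  by_cases hlt : j0+m+1 < j0+(a1+1)
                  · have hz := hval m hmr hlt
                    first | (simp at hz; simp [hz]) | simp [hz]
                  · -- m = b1+1 = a1 and a2 ≠ b2+1
                    have hm1 : a1 = b1+1 := by omega
                    have hb2 : b2+1 < a2 := by
                      rcases Nat.lt_or_ge (b2+1) a2 with h | h
                      · exact h
                      · exact absurd ⟨hm1, by omega⟩ hbord
                    have e1 := h1 (j0+m) 0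
                    rw [Finset.sum_range_succ (fun m' => α2 m' * μ (j0+m) (0+m')) (a2+1)] at e1
                    rw [show j0+m+1 = j0+(a1+1) by omega] at e1
                    rw [Finset.sum_eq_zero (s := range (b2+2))
                        (f := fun m' => β2 m' * μ (j0+(a1+1)) (0+m'))
                        (fun m' hm' => by
                          have := mem_range.mp hm'
                          have hz := ihk (0+m') (by omega) (by omega)
                          first | (simp at hz; simp [hz]) | simp [hz])] at e1
                    rw [Finset.sum_eq_zero (s := range (b2+2))
                        (f := fun m' => β2 m' * μ (j0+m) (0-1+m'))
                        (fun m' hm' => by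
                          have := mem_range.mp hm'
                          have hz := ihJ (j0+m) (by omega) (0-1+m') (by omega)
                          first | (simp at hz; simp [hz]) | simp [hz])] at e1
                    rw [Finset.sum_eq_zero (s := range (a2+1))
                        (f := fun m' => α2 m' * μ (j0+m) (0+m'))
                        (fun m' hm' => by
                          have := mem_range.mp hm'
                          have hz := ihJ (j0+m) (by omega) (0+m') (by omega)
                          first | (simp at hz; simp [hz]) | simp [hz])] at e1
                    have h' : α2 (a2+1) * μ (j0+m) (0+(a2+1)) = 0 := by
                      push_cast at e1; linear_combination -e1
                    have := (mul_eq_zero.mp h').resolve_left hα2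
                    simp only [Nat.zero_add] at this
                    simp [this])] at e
            have h' : α1 (a1+1) * μ (j0+(a1+1)) a2 = 0 := by linear_combination -e
            exact (mul_eq_zero.mp h').resolve_left hα1


noncomputable def colFun (a1 b1 a2 b2 : ℕ) (α1 β1 α2 β2 : ℕ → ℂ) (c : ℕ → ℕ → ℂ) :
    ℕ → ℕ → ℂ := fun J k =>
  if J ≤ a1 then c J k
  else if a2 < k then 0
  else
    (let j0 := J - (a1+1)
    if k < a2 then
      (α1 (a1+1))⁻¹ *
        ((∑ m ∈ Finset.range (b1+2), β1 m *
            (if h : j0+m < J then colFun a1 b1 a2 b2 α1 β1 α2 β2 c (j0+m) (k+1) else 0))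
        + (j0:ℂ) * (∑ m ∈ Finset.range (b1+2), β1 m *
            (if h : j0-1+m < J then colFun a1 b1 a2 b2 α1 β1 α2 β2 c (j0-1+m) k else 0))
        - ∑ m ∈ Finset.range (a1+1), α1 m *
            (if h : j0+m < J then colFun a1 b1 a2 b2 α1 β1 α2 β2 c (j0+m) k else 0))
    else
      (α1 (a1+1) - (if a1 = b1+1 ∧ a2 = b2+1 then β1 (b1+1) * β2 (b2+1) * (α2 (a2+1))⁻¹ else 0))⁻¹ *
        ((∑ m ∈ Finset.range (b1+2), β1 m *
            ((α2 (a2+1))⁻¹ *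
              ((∑ m' ∈ Finset.range (b2+2), β2 m' *
                  (if h : j0+m+1 < J then colFun a1 b1 a2 b2 α1 β1 α2 β2 c (j0+m+1) m'
                   else if h' : m' < k then colFun a1 b1 a2 b2 α1 β1 α2 β2 c J m' else 0))
               - ∑ m' ∈ Finset.range (a2+1), α2 m' *
                  (if h : j0+m < J then colFun a1 b1 a2 b2 α1 β1 α2 β2 c (j0+m) m' else 0))))
        + (j0:ℂ) * (∑ m ∈ Finset.range (b1+2), β1 m *
            (if h : j0-1+m < J then colFun a1 b1 a2 b2 α1 β1 α2 β2 c (j0-1+m) k else 0))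
        - ∑ m ∈ Finset.range (a1+1), α1 m *
            (if h : j0+m < J then colFun a1 b1 a2 b2 α1 β1 α2 β2 c (j0+m) k else 0)))
  termination_by J k => (J, k)
  decreasing_by all_goals (first | exact Prod.Lex.left _ _ h | exact Prod.Lex.right _ h')

section
variable (a1 b1 a2 b2 : ℕ) (α1 β1 α2 β2 : ℕ → ℂ) (c : ℕ → ℕ → ℂ)

lemma col_grid (J k : ℕ) (h : J ≤ a1) :
    colFun a1 b1 a2 b2 α1 β1 α2 β2 c J k = c J k := by
  rw [colFun]
  simp [h]

lemma col_low (hα1 : α1 (a1+1) ≠ 0) (hdeg1 : b1+1 ≤ a1) (j0 k : ℕ) (hk : k < a2) :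
    α1 (a1+1) * colFun a1 b1 a2 b2 α1 β1 α2 β2 c (j0+(a1+1)) k
    = (∑ m ∈ range (b1+2), β1 m * colFun a1 b1 a2 b2 α1 β1 α2 β2 c (j0+m) (k+1))
      + (j0:ℂ) * (∑ m ∈ range (b1+2), β1 m * colFun a1 b1 a2 b2 α1 β1 α2 β2 c (j0-1+m) k)
      - ∑ m ∈ range (a1+1), α1 m * colFun a1 b1 a2 b2 α1 β1 α2 β2 c (j0+m) k := by
  conv_lhs => rw [colFun]
  rw [if_neg (by omega), if_neg (by omega : ¬ a2 < k)]
  simp only [Nat.add_sub_cancel, if_pos hk]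
  set F := colFun a1 b1 a2 b2 α1 β1 α2 β2 c with hF
  have e1 : ∑ m ∈ range (b1+2), β1 m * (if h : j0+m < j0+(a1+1) then F (j0+m) (k+1) else 0)
      = ∑ m ∈ range (b1+2), β1 m * F (j0+m) (k+1) :=
    Finset.sum_congr rfl (fun m hm => by
      rw [dif_pos (by have := mem_range.mp hm; omega : j0+m < j0+(a1+1))])
  have e2 : ∑ m ∈ range (b1+2), β1 m * (if h : j0-1+m < j0+(a1+1) then F (j0-1+m) k else 0)
      = ∑ m ∈ range (b1+2), β1 m * F (j0-1+m) k :=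
    Finset.sum_congr rfl (fun m hm => by
      rw [dif_pos (by have := mem_range.mp hm; omega : j0-1+m < j0+(a1+1))])
  have e3 : ∑ m ∈ range (a1+1), α1 m * (if h : j0+m < j0+(a1+1) then F (j0+m) k else 0)
      = ∑ m ∈ range (a1+1), α1 m * F (j0+m) k :=
    Finset.sum_congr rfl (fun m hm => by
      rw [dif_pos (by have := mem_range.mp hm; omega : j0+m < j0+(a1+1))])
  rw [e1, e2, e3, ← mul_assoc, mul_inv_cancel₀ hα1, one_mul]
end

section
variable (a1 b1 a2 b2 : ℕ) (α1 β1 α2 β2 : ℕ → ℂ) (c : ℕ → ℕ → ℂ)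

lemma col_top (hα1 : α1 (a1+1) ≠ 0) (hα2 : α2 (a2+1) ≠ 0)
    (hdeg1 : b1+1 ≤ a1) (hdeg2 : b2+1 ≤ a2)
    (hborder : a1 = b1 + 1 → a2 = b2 + 1 →
      α1 (a1 + 1) * α2 (a2 + 1) - β1 (b1 + 1) * β2 (b2 + 1) ≠ 0) (j0 : ℕ) :
    (α1 (a1+1) - (if a1 = b1+1 ∧ a2 = b2+1 then β1 (b1+1) * β2 (b2+1) * (α2 (a2+1))⁻¹ else 0)) *
      colFun a1 b1 a2 b2 α1 β1 α2 β2 c (j0+(a1+1)) a2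
    = (∑ m ∈ range (b1+2), β1 m * ((α2 (a2+1))⁻¹ *
        ((∑ m' ∈ range (b2+2), β2 m' *
            (if j0+m+1 = j0+(a1+1) ∧ m' = a2 then 0
             else colFun a1 b1 a2 b2 α1 β1 α2 β2 c (j0+m+1) m'))
         - ∑ m' ∈ range (a2+1), α2 m' * colFun a1 b1 a2 b2 α1 β1 α2 β2 c (j0+m) m')))
      + (j0:ℂ) * (∑ m ∈ range (b1+2), β1 m * colFun a1 b1 a2 b2 α1 β1 α2 β2 c (j0-1+m) a2)
      - ∑ m ∈ range (a1+1), α1 m * colFun a1 b1 a2 b2 α1 β1 α2 β2 c (j0+m) a2 := by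
  set δ := (if a1 = b1+1 ∧ a2 = b2+1 then β1 (b1+1) * β2 (b2+1) * (α2 (a2+1))⁻¹ else 0) with hδ
  have hne : α1 (a1+1) - δ ≠ 0 := by
    rw [hδ]
    split_ifs with hb
    · have hb' := hborder hb.1 hb.2
      intro h
      apply hb'
      have h2 := sub_eq_zero.mp h
      rw [h2]
      field_simp
      ring
    · simpa using hα1
  conv_lhs => rw [colFun]
  rw [if_neg (by omega : ¬ j0+(a1+1) ≤ a1), if_neg (by omega : ¬ a2 < a2)]
  simp only [Nat.add_sub_cancel]
  rw [if_neg (by omega : ¬ a2 < a2)]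
  set F := colFun a1 b1 a2 b2 α1 β1 α2 β2 c with hF
  have e2 : ∑ m ∈ range (b1+2), β1 m * (if h : j0-1+m < j0+(a1+1) then F (j0-1+m) a2 else 0)
      = ∑ m ∈ range (b1+2), β1 m * F (j0-1+m) a2 :=
    Finset.sum_congr rfl (fun m hm => by
      rw [dif_pos (by have := mem_range.mp hm; omega : j0-1+m < j0+(a1+1))])
  have e3 : ∑ m ∈ range (a1+1), α1 m * (if h : j0+m < j0+(a1+1) then F (j0+m) a2 else 0)
      = ∑ m ∈ range (a1+1), α1 m * F (j0+m) a2 :=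
    Finset.sum_congr rfl (fun m hm => by
      rw [dif_pos (by have := mem_range.mp hm; omega : j0+m < j0+(a1+1))])
  have e1 : ∑ m ∈ range (b1+2), β1 m * ((α2 (a2+1))⁻¹ *
        ((∑ m' ∈ range (b2+2), β2 m' *
            (if h : j0+m+1 < j0+(a1+1) then F (j0+m+1) m'
             else if h' : m' < a2 then F (j0+(a1+1)) m' else 0))
         - ∑ m' ∈ range (a2+1), α2 m' * (if h : j0+m < j0+(a1+1) then F (j0+m) m' else 0)))
      = ∑ m ∈ range (b1+2), β1 m * ((α2 (a2+1))⁻¹ *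
        ((∑ m' ∈ range (b2+2), β2 m' *
            (if j0+m+1 = j0+(a1+1) ∧ m' = a2 then 0 else F (j0+m+1) m'))
         - ∑ m' ∈ range (a2+1), α2 m' * F (j0+m) m')) := by
    refine Finset.sum_congr rfl (fun m hm => ?_)
    have hmr := mem_range.mp hm
    congr 1
    congr 1
    congr 1
    · refine Finset.sum_congr rfl (fun m' hm' => ?_)
      have hmr' := mem_range.mp hm'
      congr 1
      by_cases hc : j0+m+1 < j0+(a1+1)
      · rw [dif_pos hc, if_neg (by omega)]
      · have hceq : j0+m+1 = j0+(a1+1) := by omega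
        rw [dif_neg hc]
        by_cases hm2 : m' < a2
        · rw [dif_pos hm2, if_neg (by omega), hceq]
        · have : m' = a2 := by omega
          rw [dif_neg hm2, if_pos ⟨hceq, this⟩]
    · refine Finset.sum_congr rfl (fun m' hm' => ?_)
      rw [dif_pos (by have := mem_range.mp hm; omega : j0+m < j0+(a1+1))]
  rw [e1, e2, e3, ← mul_assoc, mul_inv_cancel₀ hne, one_mul]

end

noncomputable def fullFun (a2 b2 : ℕ) (α2 β2 : ℕ → ℂ) (s : ℕ → ℕ → ℂ) : ℕ → ℕ → ℂ := fun k j =>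
  if k ≤ a2 then s j k
  else
    (let k0 := k - (a2+1)
    (α2 (a2+1))⁻¹ *
      ((∑ m ∈ Finset.range (b2+2), β2 m *
          (if h : k0+m < k then fullFun a2 b2 α2 β2 s (k0+m) (j+1) else 0))
       + (k0:ℂ) * (∑ m ∈ Finset.range (b2+2), β2 m *
          (if h : k0-1+m < k then fullFun a2 b2 α2 β2 s (k0-1+m) j else 0))
       - ∑ m ∈ Finset.range (a2+1), α2 m *
          (if h : k0+m < k then fullFun a2 b2 α2 β2 s (k0+m) j else 0)))
  termination_by k j => k
  decreasing_by all_goals exact h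

section
variable (a2 b2 : ℕ) (α2 β2 : ℕ → ℂ) (s : ℕ → ℕ → ℂ)

lemma full_low (k j : ℕ) (hk : k ≤ a2) : fullFun a2 b2 α2 β2 s k j = s j k := by
  rw [fullFun]; simp [hk]

lemma full_high (hα2 : α2 (a2+1) ≠ 0) (hdeg2 : b2+1 ≤ a2) (k0 j : ℕ) :
    α2 (a2+1) * fullFun a2 b2 α2 β2 s (k0+(a2+1)) j
    = (∑ m ∈ range (b2+2), β2 m * fullFun a2 b2 α2 β2 s (k0+m) (j+1))
      + (k0:ℂ) * (∑ m ∈ range (b2+2), β2 m * fullFun a2 b2 α2 β2 s (k0-1+m) j)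
      - ∑ m ∈ range (a2+1), α2 m * fullFun a2 b2 α2 β2 s (k0+m) j := by
  conv_lhs => rw [fullFun]
  rw [if_neg (by omega : ¬ k0+(a2+1) ≤ a2)]
  simp only [Nat.add_sub_cancel]
  set G := fullFun a2 b2 α2 β2 s with hG
  have e1 : ∑ m ∈ range (b2+2), β2 m * (if h : k0+m < k0+(a2+1) then G (k0+m) (j+1) else 0)
      = ∑ m ∈ range (b2+2), β2 m * G (k0+m) (j+1) :=
    Finset.sum_congr rfl (fun m hm => by
      rw [dif_pos (by have := mem_range.mp hm; omega : k0+m < k0+(a2+1))])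
  have e2 : ∑ m ∈ range (b2+2), β2 m * (if h : k0-1+m < k0+(a2+1) then G (k0-1+m) j else 0)
      = ∑ m ∈ range (b2+2), β2 m * G (k0-1+m) j :=
    Finset.sum_congr rfl (fun m hm => by
      rw [dif_pos (by have := mem_range.mp hm; omega : k0-1+m < k0+(a2+1))])
  have e3 : ∑ m ∈ range (a2+1), α2 m * (if h : k0+m < k0+(a2+1) then G (k0+m) j else 0)
      = ∑ m ∈ range (a2+1), α2 m * G (k0+m) j :=
    Finset.sum_congr rfl (fun m hm => by
      rw [dif_pos (by have := mem_range.mp hm; omega : k0+m < k0+(a2+1))])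
  rw [e1, e2, e3, ← mul_assoc, mul_inv_cancel₀ hα2, one_mul]

end

lemma exists_sol (a1 b1 a2 b2 : ℕ) (α1 β1 α2 β2 : ℕ → ℂ)
    (hα1 : α1 (a1+1) ≠ 0) (hα2 : α2 (a2+1) ≠ 0)
    (hdeg1 : b1+1 ≤ a1) (hdeg2 : b2+1 ≤ a2)
    (hborder : a1 = b1 + 1 → a2 = b2 + 1 →
      α1 (a1 + 1) * α2 (a2 + 1) - β1 (b1 + 1) * β2 (b2 + 1) ≠ 0)
    (c : ℕ → ℕ → ℂ) :
    ∃ μ : Coeffs,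
      (∀ j k, (∑ m ∈ range (b2+2), β2 m * μ (j+1) (k+m))
          + (k:ℂ) * (∑ m ∈ range (b2+2), β2 m * μ j (k-1+m))
          = ∑ m ∈ range (a2+2), α2 m * μ j (k+m)) ∧
      (∀ j k, k ≤ a2 → (∑ m ∈ range (b1+2), β1 m * μ (j+m) (k+1))
          + (j:ℂ) * (∑ m ∈ range (b1+2), β1 m * μ (j-1+m) k)
          = ∑ m ∈ range (a1+2), α1 m * μ (j+m) k) ∧
      (∀ j k, j ≤ a1 → k ≤ a2 → μ j k = c j k) := by
  set F := colFun a1 b1 a2 b2 α1 β1 α2 β2 c with hFdef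
  set G := fullFun a2 b2 α2 β2 F with hGdef
  have fl : ∀ k j, k ≤ a2 → G k j = F j k := fun k j hk => full_low a2 b2 α2 β2 F k j hk
  have fh : ∀ k0 j, α2 (a2+1) * G (k0+(a2+1)) j
      = (∑ m ∈ range (b2+2), β2 m * G (k0+m) (j+1))
        + (k0:ℂ) * (∑ m ∈ range (b2+2), β2 m * G (k0-1+m) j)
        - ∑ m ∈ range (a2+1), α2 m * G (k0+m) j :=
    fun k0 j => full_high a2 b2 α2 β2 F hα2 hdeg2 k0 j
  refine ⟨fun j k => G k j, ?_, ?_, ?_⟩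
  · -- Eq1 everywhere
    intro j k
    beta_reduce
    rw [Finset.sum_range_succ (fun m => α2 m * G (k+m) j) (a2+1)]
    linear_combination -(fh k j)
  · -- Eq2 on the strip
    intro j0 k hk
    beta_reduce
    -- convert G _ at rows ≤ a2 into F
    rcases Nat.lt_or_ge k a2 with hk2 | hk2
    · -- easy rows
      have g1 : ∑ m ∈ range (b1+2), β1 m * G (k+1) (j0+m)
          = ∑ m ∈ range (b1+2), β1 m * F (j0+m) (k+1) :=
        Finset.sum_congr rfl (fun m hm => by rw [fl (k+1) (j0+m) (by omega)])
      have g2 : ∑ m ∈ range (b1+2), β1 m * G k (j0-1+m)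
          = ∑ m ∈ range (b1+2), β1 m * F (j0-1+m) k :=
        Finset.sum_congr rfl (fun m hm => by rw [fl k (j0-1+m) (by omega)])
      have g3 : ∑ m ∈ range (a1+2), α1 m * G k (j0+m)
          = ∑ m ∈ range (a1+2), α1 m * F (j0+m) k :=
        Finset.sum_congr rfl (fun m hm => by rw [fl k (j0+m) (by omega)])
      rw [g1, g2, g3, Finset.sum_range_succ (fun m => α1 m * F (j0+m) k) (a1+1)]
      linear_combination -(col_low a1 b1 a2 b2 α1 β1 α2 β2 c hα1 hdeg1 j0 k hk2)
    · -- top row k = a2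
      have hka : k = a2 := by omega
      rw [hka]
      clear hka hk hk2
      -- the e1-derived expansion of the (a2+1)-row entries
      have hE : ∀ m : ℕ, α2 (a2+1) * G (a2+1) (j0+m)
          = (∑ m' ∈ range (b2+2), β2 m' * F (j0+m+1) m')
            - ∑ m' ∈ range (a2+1), α2 m' * F (j0+m) m' := by
        intro m
        have hh := fh 0 (j0+m)
        simp only [Nat.zero_add, Nat.cast_zero, zero_mul, add_zero, Nat.zero_sub] at hh
        have g1 : ∑ m' ∈ range (b2+2), β2 m' * G m' (j0+m+1)
            = ∑ m' ∈ range (b2+2), β2 m' * F (j0+m+1) m' :=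
          Finset.sum_congr rfl (fun m' hm' => by
            rw [fl m' (j0+m+1) (by have := mem_range.mp hm'; omega)])
        have g3 : ∑ m' ∈ range (a2+1), α2 m' * G m' (j0+m)
            = ∑ m' ∈ range (a2+1), α2 m' * F (j0+m) m' :=
          Finset.sum_congr rfl (fun m' hm' => by
            rw [fl m' (j0+m) (by have := mem_range.mp hm'; omega)])
        rw [g1, g3] at hh
        linear_combination hh
      have hEinv : ∀ m : ℕ, (α2 (a2+1))⁻¹ *
            ((∑ m' ∈ range (b2+2), β2 m' * F (j0+m+1) m')
              - ∑ m' ∈ range (a2+1), α2 m' * F (j0+m) m')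
          = G (a2+1) (j0+m) := by
        intro m
        rw [inv_mul_eq_iff_eq_mul₀ hα2]
        linear_combination - hE m
      have hD := col_top a1 b1 a2 b2 α1 β1 α2 β2 c hα1 hα2 hdeg1 hdeg2 hborder j0
      rw [← hFdef] at hD
      -- convert goal rows a2 into F
      have g2 : ∑ m ∈ range (b1+2), β1 m * G a2 (j0-1+m)
          = ∑ m ∈ range (b1+2), β1 m * F (j0-1+m) a2 :=
        Finset.sum_congr rfl (fun m hm => by rw [fl a2 (j0-1+m) le_rfl])
      have g3 : ∑ m ∈ range (a1+2), α1 m * G a2 (j0+m)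
          = ∑ m ∈ range (a1+2), α1 m * F (j0+m) a2 :=
        Finset.sum_congr rfl (fun m hm => by rw [fl a2 (j0+m) le_rfl])
      have gtop : G a2 (j0+(a1+1)) = F (j0+(a1+1)) a2 := fl a2 _ le_rfl
      rw [g2, g3, Finset.sum_range_succ (fun m => α1 m * F (j0+m) a2) (a1+1)]
      by_cases hbd : a1 = b1+1 ∧ a2 = b2+1
      · -- borderline case
        obtain ⟨hb1, hb2⟩ := hbd
        rw [if_pos ⟨hb1, hb2⟩] at hD
        -- split the outer sum in hD and the goal at m = b1+1
        rw [Finset.sum_range_succ (fun m => β1 m * ((α2 (a2+1))⁻¹ *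
              ((∑ m' ∈ range (b2+2), β2 m' *
                  (if j0+m+1 = j0+(a1+1) ∧ m' = a2 then 0 else F (j0+m+1) m'))
               - ∑ m' ∈ range (a2+1), α2 m' * F (j0+m) m'))) (b1+1)] at hD
        rw [Finset.sum_range_succ (fun m => β1 m * G (a2+1) (j0+m)) (b1+1)]
        -- lower part of hD sum equals G-entries
        have hlow : ∑ m ∈ range (b1+1), β1 m * ((α2 (a2+1))⁻¹ *
              ((∑ m' ∈ range (b2+2), β2 m' *
                  (if j0+m+1 = j0+(a1+1) ∧ m' = a2 then 0 else F (j0+m+1) m'))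
               - ∑ m' ∈ range (a2+1), α2 m' * F (j0+m) m'))
            = ∑ m ∈ range (b1+1), β1 m * G (a2+1) (j0+m) := by
          refine Finset.sum_congr rfl (fun m hm => ?_)
          have hmr := mem_range.mp hm
          have hcond : ∑ m' ∈ range (b2+2), β2 m' *
                (if j0+m+1 = j0+(a1+1) ∧ m' = a2 then 0 else F (j0+m+1) m')
              = ∑ m' ∈ range (b2+2), β2 m' * F (j0+m+1) m' :=
            Finset.sum_congr rfl (fun m' hm' => by
              rw [if_neg (by omega : ¬(j0+m+1 = j0+(a1+1) ∧ m' = a2))])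
          rw [hcond, hEinv m]
        rw [hlow] at hD
        -- top term of hD : split inner sum at m' = b2 + 1
        have htopin : ∑ m' ∈ range (b2+2), β2 m' *
              (if j0+(b1+1)+1 = j0+(a1+1) ∧ m' = a2 then 0 else F (j0+(b1+1)+1) m')
            = ∑ m' ∈ range (b2+1), β2 m' * F (j0+(b1+1)+1) m' := by
          rw [Finset.sum_range_succ (fun m' => β2 m' *
              (if j0+(b1+1)+1 = j0+(a1+1) ∧ m' = a2 then 0 else F (j0+(b1+1)+1) m')) (b2+1)]
          rw [if_pos ⟨by omega, by omega⟩, mul_zero, add_zero]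
          exact Finset.sum_congr rfl (fun m' hm' => by
            rw [if_neg (by have := mem_range.mp hm'; omega : ¬(j0+(b1+1)+1 = j0+(a1+1) ∧ m' = a2))])
        rw [htopin] at hD
        -- expansion of the top-row entry G (a2+1) (j0+(b1+1))
        have hsum : ∑ m' ∈ range (b2+2), β2 m' * F (j0+(b1+1)+1) m'
            = (∑ m' ∈ range (b2+1), β2 m' * F (j0+(b1+1)+1) m')
              + β2 (b2+1) * F (j0+(a1+1)) a2 := by
          rw [Finset.sum_range_succ]
          congr 1
          rw [show j0+(b1+1)+1 = j0+(a1+1) by omega, show b2+1 = a2 by omega]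
        have hT : α2 (a2+1) * G (a2+1) (j0+(b1+1))
            = (∑ m' ∈ range (b2+1), β2 m' * F (j0+(b1+1)+1) m')
              + β2 (b2+1) * F (j0+(a1+1)) a2
              - ∑ m' ∈ range (a2+1), α2 m' * F (j0+(b1+1)) m' := by
          have h5 := hE (b1+1)
          rw [hsum] at h5
          linear_combination h5
        have hTinv : G (a2+1) (j0+(b1+1))
            = (α2 (a2+1))⁻¹ * ((∑ m' ∈ range (b2+1), β2 m' * F (j0+(b1+1)+1) m')
              + β2 (b2+1) * F (j0+(a1+1)) a2
              - ∑ m' ∈ range (a2+1), α2 m' * F (j0+(b1+1)) m') := by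
          rw [eq_inv_mul_iff_mul_eq₀ hα2]
          linear_combination hT
        linear_combination β1 (b1+1) * hTinv - hD
      · -- non-borderline case
        rw [if_neg hbd] at hD
        have hlow : ∑ m ∈ range (b1+2), β1 m * ((α2 (a2+1))⁻¹ *
              ((∑ m' ∈ range (b2+2), β2 m' *
                  (if j0+m+1 = j0+(a1+1) ∧ m' = a2 then 0 else F (j0+m+1) m'))
               - ∑ m' ∈ range (a2+1), α2 m' * F (j0+m) m'))
            = ∑ m ∈ range (b1+2), β1 m * G (a2+1) (j0+m) := by
          refine Finset.sum_congr rfl (fun m hm => ?_)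
          have hmr := mem_range.mp hm
          have hcond : ∑ m' ∈ range (b2+2), β2 m' *
                (if j0+m+1 = j0+(a1+1) ∧ m' = a2 then 0 else F (j0+m+1) m')
              = ∑ m' ∈ range (b2+2), β2 m' * F (j0+m+1) m' := by
            refine Finset.sum_congr rfl (fun m' hm' => ?_)
            have hmr' := mem_range.mp hm'
            rcases Nat.lt_or_ge (b1+1) a1 with hd1 | hd1
            · rw [if_neg (by omega : ¬(j0+m+1 = j0+(a1+1) ∧ m' = a2))]
            · have hb1 : a1 = b1+1 := by omega
              have hb2 : a2 ≠ b2+1 := fun h => hbd ⟨hb1, h⟩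
              rw [if_neg (by omega : ¬(j0+m+1 = j0+(a1+1) ∧ m' = a2))]
          rw [hcond, hEinv m]
        rw [hlow] at hD
        linear_combination -hD
  · -- initial data
    intro j k hj hk
    beta_reduce
    rw [fl k j hk]
    exact col_grid a1 b1 a2 b2 α1 β1 α2 β2 c j k hj


/-- under the degree assumptions `deg B_i + 1 ≤ deg A_i = a_i + 1`
(with the nondegeneracy determinant condition in the borderline case), the space of
formal power series solutions of the system `[(∂z+w)B₂(∂w)-A₂(∂w)]F = 0`,
`[(∂w+z)B₁(∂z)-A₁(∂z)]F = 0` has dimension exactly `(a₁+1)(a₂+1)`. -/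
theorem stmt_8 (a1 b1 a2 b2 : ℕ) (α1 β1 α2 β2 : ℕ → ℂ)
    (hα1 : α1 (a1 + 1) ≠ 0) (hα2 : α2 (a2 + 1) ≠ 0)
    (hdeg1 : b1 + 1 ≤ a1) (hdeg2 : b2 + 1 ≤ a2)
    (hborder : a1 = b1 + 1 → a2 = b2 + 1 →
      α1 (a1 + 1) * α2 (a2 + 1) - β1 (b1 + 1) * β2 (b2 + 1) ≠ 0) :
    letI A1 := polyOf (a1 + 1) α1
    letI B1 := polyOf (b1 + 1) β1
    letI A2 := polyOf (a2 + 1) α2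
    letI B2 := polyOf (b2 + 1) β2
    Module.finrank ℂ
      ↥(LinearMap.ker ((Dz + Mw) * Polynomial.aeval Dw B2 - Polynomial.aeval Dw A2) ⊓
        LinearMap.ker ((Dw + Mz) * Polynomial.aeval Dz B1 - Polynomial.aeval Dz A1)) =
      (a1 + 1) * (a2 + 1) := by
  show Module.finrank ℂ
      ↥(LinearMap.ker ((Dz + Mw) * Polynomial.aeval Dw (polyOf (b2 + 1) β2) -
          Polynomial.aeval Dw (polyOf (a2 + 1) α2)) ⊓
        LinearMap.ker ((Dw + Mz) * Polynomial.aeval Dz (polyOf (b1 + 1) β1) -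
          Polynomial.aeval Dz (polyOf (a1 + 1) α1))) = (a1 + 1) * (a2 + 1)
  set L1 := (Dz + Mw) * Polynomial.aeval Dw (polyOf (b2 + 1) β2) -
      Polynomial.aeval Dw (polyOf (a2 + 1) α2) with hL1def
  set L2 := (Dw + Mz) * Polynomial.aeval Dz (polyOf (b1 + 1) β1) -
      Polynomial.aeval Dz (polyOf (a1 + 1) α1) with hL2def
  have hm1 : ∀ μ : Coeffs, μ ∈ LinearMap.ker L1 ↔
      (∀ j k, (∑ m ∈ Finset.range (b2+2), β2 m * μ (j+1) (k+m))
          + (k:ℂ) * (∑ m ∈ Finset.range (b2+2), β2 m * μ j (k-1+m))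
          = ∑ m ∈ Finset.range (a2+2), α2 m * μ j (k+m)) := by
    intro μ
    rw [LinearMap.mem_ker]
    constructor
    · intro h j k
      have h2 := congrFun (congrFun h j) k
      rw [hL1def] at h2
      rw [L1_apply a2 b2 α2 β2 μ j k] at h2
      exact sub_eq_zero.mp h2
    · intro h
      funext j k
      show (L1 μ) j k = (0 : ℂ)
      rw [hL1def, L1_apply a2 b2 α2 β2 μ j k]
      exact sub_eq_zero_of_eq (h j k)
  have hm2 : ∀ μ : Coeffs, μ ∈ LinearMap.ker L2 ↔
      (∀ j k, (∑ m ∈ Finset.range (b1+2), β1 m * μ (j+m) (k+1))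
          + (j:ℂ) * (∑ m ∈ Finset.range (b1+2), β1 m * μ (j-1+m) k)
          = ∑ m ∈ Finset.range (a1+2), α1 m * μ (j+m) k) := by
    intro μ
    rw [LinearMap.mem_ker]
    constructor
    · intro h j k
      have h2 := congrFun (congrFun h j) k
      rw [hL2def] at h2
      rw [L2_apply a1 b1 α1 β1 μ j k] at h2
      exact sub_eq_zero.mp h2
    · intro h
      funext j k
      show (L2 μ) j k = (0 : ℂ)
      rw [hL2def, L2_apply a1 b1 α1 β1 μ j k]
      exact sub_eq_zero_of_eq (h j k)
  have hcomm : L1 * L2 = L2 * L1 := commute_L1L2 a1 b1 a2 b2 α1 β1 α2 β2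
  let ρ : Coeffs →ₗ[ℂ] (Fin (a1+1) → Fin (a2+1) → ℂ) :=
    { toFun := fun μ i l => μ i.1 l.1
      map_add' := fun _ _ => rfl
      map_smul' := fun _ _ => rfl }
  set S : Submodule ℂ Coeffs := LinearMap.ker L1 ⊓ LinearMap.ker L2 with hSdef
  have hker : ∀ x : S, ρ.domRestrict S x = 0 → x = 0 := by
    rintro ⟨μ, hμ⟩ hx
    have hμ1 := (hm1 μ).mp ((Submodule.mem_inf.mp hμ).1)
    have hμ2 := (hm2 μ).mp ((Submodule.mem_inf.mp hμ).2)
    have hgrid : ∀ j k, j ≤ a1 → k ≤ a2 → μ j k = 0 := by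
      intro j k hj hk
      have := congrFun (congrFun hx ⟨j, by omega⟩) ⟨k, by omega⟩
      exact this
    have hstrip := strip0 a1 b1 a2 b2 α1 β1 α2 β2 hα1 hα2 hdeg1 hdeg2 hborder μ hμ1 hμ2 hgrid
    have : μ = 0 := ext0 a2 b2 α2 β2 hα2 hdeg2 μ hμ1 (fun j k hk => hstrip j k hk)
    exact Subtype.ext this
  have hinj : Function.Injective (ρ.domRestrict S) :=
    LinearMap.ker_eq_bot.mp (LinearMap.ker_eq_bot'.mpr hker)
  have hsurj : Function.Surjective (ρ.domRestrict S) := by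
    intro v
    set c : ℕ → ℕ → ℂ :=
      fun j k => if h : j < a1+1 ∧ k < a2+1 then v ⟨j, h.1⟩ ⟨k, h.2⟩ else 0 with hcdef
    obtain ⟨μ, p1, p2, p3⟩ :=
      exists_sol a1 b1 a2 b2 α1 β1 α2 β2 hα1 hα2 hdeg1 hdeg2 hborder c
    have hk1 : μ ∈ LinearMap.ker L1 := (hm1 μ).mpr p1
    have hk2 : μ ∈ LinearMap.ker L2 := by
      rw [LinearMap.mem_ker]
      have hg1 : L1 (L2 μ) = 0 := by
        calc L1 (L2 μ) = (L1 * L2) μ := rfl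
          _ = (L2 * L1) μ := by rw [hcomm]
          _ = L2 (L1 μ) := rfl
          _ = 0 := by rw [LinearMap.mem_ker.mp hk1, map_zero]
      have hgEq1 := (hm1 (L2 μ)).mp (LinearMap.mem_ker.mpr hg1)
      have hstrip : ∀ j k, k ≤ a2 → (L2 μ) j k = 0 := by
        intro j k hk
        rw [hL2def, L2_apply a1 b1 α1 β1 μ j k]
        exact sub_eq_zero_of_eq (p2 j k hk)
      exact ext0 a2 b2 α2 β2 hα2 hdeg2 (L2 μ) hgEq1 hstrip
    refine ⟨⟨μ, Submodule.mem_inf.mpr ⟨hk1, hk2⟩⟩, ?_⟩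
    funext i l
    show μ i.1 l.1 = v i l
    rw [p3 i.1 l.1 (Nat.lt_succ_iff.mp i.isLt) (Nat.lt_succ_iff.mp l.isLt)]
    rw [hcdef]
    simp only [dif_pos (And.intro i.isLt l.isLt)]
  have heq : Module.finrank ℂ S = Module.finrank ℂ (Fin (a1+1) → Fin (a2+1) → ℂ) :=
    (LinearEquiv.ofBijective (ρ.domRestrict S) ⟨hinj, hsurj⟩).finrank_eq
  rw [heq, Module.finrank_pi_fintype ℂ]
  simp [Module.finrank_pi]
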